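/- Writing μ₁ = ∫ x dμ(x) and μ₂ = ∫ x² dμ(x), one has a + 1/2 < μ₁ < b − 1/2 and μ₂ − μ₁² > 1/12. -/

import Mathlib

open MeasureTheory Complex Filter Set

noncomputable section

/-- The support of a measure on `ℝ`. -/
def msupport (μ : Measure ℝ) : Set ℝ := {x | ∀ U ∈ nhds x, μ U ≠ 0}

lemma cont_int {μ : Measure ℝ} [IsProbabilityMeasure μ] {a b : ℝ}
    (hμab : ∀ᵐ x ∂μ, x ∈ Set.Icc a b) {f : ℝ → ℝ} (hf : Continuous f) :
    Integrable f μ := by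
  obtain ⟨C, hC⟩ := (isCompact_Icc (a := a) (b := b)).exists_bound_of_continuousOn
    hf.continuousOn
  exact (integrable_const C).mono' hf.aestronglyMeasurable
    (hμab.mono fun x hx => hC x hx)

lemma pos_int {μ : Measure ℝ} [IsFiniteMeasure μ] {q : ℝ → ℝ} (hq : Integrable q μ)
    (hq0 : ∀ x, 0 ≤ q x) {s : Set ℝ} (hs : MeasurableSet s) (hμs : μ s ≠ 0)
    {δ : ℝ} (hδ : 0 < δ) (hqs : ∀ x ∈ s, δ ≤ q x) : 0 < ∫ x, q x ∂μ := by
  have h1 : ∫ x, s.indicator (fun _ => δ) x ∂μ ≤ ∫ x, q x ∂μ := by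
    refine integral_mono ((integrable_const δ).indicator hs) hq ?_
    intro x
    by_cases hx : x ∈ s
    · simpa [hx] using hqs x hx
    · simpa [hx] using hq0 x
  rw [integral_indicator_const _ hs] at h1
  have h2 : 0 < (μ s).toReal := ENNReal.toReal_pos hμs (measure_ne_top μ s)
  calc (0:ℝ) < (μ s).toReal • δ := by simp only [smul_eq_mul]; positivity
    _ ≤ _ := h1

lemma upper_int {μ : Measure ℝ} (hle : μ ≤ volume) {r : ℝ → ℝ}
    {s : Set ℝ} (hs : MeasurableSet s)
    (heq : ∀ᵐ x ∂μ, r x = s.indicator r x) (hr0 : ∀ x, 0 ≤ r x)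
    (hri : IntegrableOn r s volume) :
    ∫ x, r x ∂μ ≤ ∫ x in s, r x := by
  calc ∫ x, r x ∂μ = ∫ x, s.indicator r x ∂μ := integral_congr_ae heq
    _ ≤ ∫ x, s.indicator r x := by
        refine integral_mono_measure hle (.of_forall fun x => ?_)
          (hri.integrable_indicator hs)
        exact indicator_apply_nonneg (fun _ => hr0 x)
    _ = ∫ x in s, r x := integral_indicator hs

lemma mean_lower (μ : Measure ℝ) [IsProbabilityMeasure μ] (hle : μ ≤ volume) {a b : ℝ}
    (hμab : ∀ᵐ x ∂μ, x ∈ Set.Icc a b) (hab : 1 < b - a)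
    (hb : ∀ U ∈ nhds b, μ U ≠ 0) : a + 1/2 < ∫ x, x ∂μ := by
  set p : ℝ → ℝ := fun x => min (x - a) 1 with hp_def
  set q : ℝ → ℝ := fun x => max (x - a - 1) 0 with hq_def
  set r : ℝ → ℝ := fun x => max (a + 1 - x) 0 with hr_def
  have hp : Continuous p := (continuous_id.sub continuous_const).min continuous_const
  have hq : Continuous q := ((continuous_id.sub continuous_const).sub
    continuous_const).max continuous_const
  have hr : Continuous r := (continuous_const.sub continuous_id).max continuous_const
  have Ip : Integrable p μ := cont_int hμab hp
  have Iq : Integrable q μ := cont_int hμab hq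
  have Ir : Integrable r μ := cont_int hμab hr
  have ipq : ∀ x : ℝ, x = a + p x + q x := by
    intro x
    rcases le_total (x - a) 1 with h | h
    · rw [hp_def, hq_def]; simp only
      rw [min_eq_left h, max_eq_right (by linarith)]; ring
    · rw [hp_def, hq_def]; simp only
      rw [min_eq_right h, max_eq_left (by linarith)]; ring
  have ipr : ∀ x : ℝ, p x = 1 - r x := by
    intro x
    rcases le_total (x - a) 1 with h | h
    · rw [hp_def, hr_def]; simp only
      rw [min_eq_left h, max_eq_left (by linarith)]; ring
    · rw [hp_def, hr_def]; simp only
      rw [min_eq_right h, max_eq_right (by linarith)]; ring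
  have hr_ind : ∀ᵐ x ∂μ, r x = (Icc a (a+1)).indicator r x := by
    refine hμab.mono fun x hx => ?_
    by_cases h : x ∈ Icc a (a+1)
    · rw [indicator_of_mem h]
    · rw [indicator_of_notMem h]
      have h2 : a + 1 < x := lt_of_not_ge fun h' => h ⟨hx.1, h'⟩
      exact max_eq_right (by linarith)
  have hrvol : ∫ x in Icc a (a+1), r x = 1/2 := by
    rw [setIntegral_congr_fun measurableSet_Icc
      (g := fun x => a + 1 - x) (fun x hx => max_eq_left (by linarith [hx.2]))]
    rw [integral_Icc_eq_integral_Ioc, ← intervalIntegral.integral_of_le (by linarith)]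
    rw [intervalIntegral.integral_sub intervalIntegrable_const
      intervalIntegral.intervalIntegrable_id]
    simp [integral_id]
    ring
  have hrμ : ∫ x, r x ∂μ ≤ 1/2 := by
    rw [← hrvol]
    exact upper_int hle measurableSet_Icc hr_ind (fun x => le_max_right _ _)
      (hr.integrableOn_Icc)
  have hpμ : (1:ℝ)/2 ≤ ∫ x, p x ∂μ := by
    have : ∫ x, p x ∂μ = 1 - ∫ x, r x ∂μ := by
      rw [integral_congr_ae (Eventually.of_forall ipr),
        integral_sub (integrable_const 1) Ir, integral_const]
      simp
    linarith
  have hqμ : 0 < ∫ x, q x ∂μ := by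
    refine pos_int Iq (fun x => le_max_right _ _) measurableSet_Ioi
      (hb _ (Ioi_mem_nhds (by linarith : (a+1+b)/2 < b)))
      (show (0:ℝ) < (b-a-1)/2 by linarith) ?_
    intro x hx
    have : (b-a-1)/2 ≤ x - a - 1 := by
      have := hx.out
      linarith [hx.out]
    exact le_trans this (le_max_left _ _)
  have hfinal : ∫ x, x ∂μ = a + ∫ x, p x ∂μ + ∫ x, q x ∂μ := by
    have I1 : Integrable (fun x => a + p x) μ := (integrable_const a).add Ip
    rw [integral_congr_ae (Eventually.of_forall ipq),
      integral_add I1 Iq,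
      integral_add (integrable_const a) Ip, integral_const]
    simp
  linarith

lemma mean_upper (μ : Measure ℝ) [IsProbabilityMeasure μ] (hle : μ ≤ volume) {a b : ℝ}
    (hμab : ∀ᵐ x ∂μ, x ∈ Set.Icc a b) (hab : 1 < b - a)
    (ha : ∀ U ∈ nhds a, μ U ≠ 0) : ∫ x, x ∂μ < b - 1/2 := by
  set p : ℝ → ℝ := fun x => min (b - x) 1 with hp_def
  set q : ℝ → ℝ := fun x => max (b - x - 1) 0 with hq_def
  set r : ℝ → ℝ := fun x => max (x - (b - 1)) 0 with hr_def
  have hp : Continuous p := (continuous_const.sub continuous_id).min continuous_const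
  have hq : Continuous q := ((continuous_const.sub continuous_id).sub
    continuous_const).max continuous_const
  have hr : Continuous r := (continuous_id.sub continuous_const).max continuous_const
  have Ip : Integrable p μ := cont_int hμab hp
  have Iq : Integrable q μ := cont_int hμab hq
  have Ir : Integrable r μ := cont_int hμab hr
  have ipq : ∀ x : ℝ, x = b - p x - q x := by
    intro x
    rcases le_total (b - x) 1 with h | h
    · rw [hp_def, hq_def]; simp only
      rw [min_eq_left h, max_eq_right (by linarith)]; ring
    · rw [hp_def, hq_def]; simp only
      rw [min_eq_right h, max_eq_left (by linarith)]; ring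
  have ipr : ∀ x : ℝ, p x = 1 - r x := by
    intro x
    rcases le_total (b - x) 1 with h | h
    · rw [hp_def, hr_def]; simp only
      rw [min_eq_left h, max_eq_left (by linarith)]; ring
    · rw [hp_def, hr_def]; simp only
      rw [min_eq_right h, max_eq_right (by linarith)]; ring
  have hr_ind : ∀ᵐ x ∂μ, r x = (Icc (b-1) b).indicator r x := by
    refine hμab.mono fun x hx => ?_
    by_cases h : x ∈ Icc (b-1) b
    · rw [indicator_of_mem h]
    · rw [indicator_of_notMem h]
      have h2 : x < b - 1 := lt_of_not_ge fun h' => h ⟨h', hx.2⟩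
      exact max_eq_right (by linarith)
  have hrvol : ∫ x in Icc (b-1) b, r x = 1/2 := by
    rw [setIntegral_congr_fun measurableSet_Icc
      (g := fun x => x - (b - 1)) (fun x hx => max_eq_left (by linarith [hx.1]))]
    rw [integral_Icc_eq_integral_Ioc, ← intervalIntegral.integral_of_le (by linarith)]
    rw [intervalIntegral.integral_sub intervalIntegral.intervalIntegrable_id
      intervalIntegrable_const]
    simp [integral_id]
    ring
  have hrμ : ∫ x, r x ∂μ ≤ 1/2 := by
    rw [← hrvol]
    exact upper_int hle measurableSet_Icc hr_ind (fun x => le_max_right _ _)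
      (hr.integrableOn_Icc)
  have hpμ : (1:ℝ)/2 ≤ ∫ x, p x ∂μ := by
    have : ∫ x, p x ∂μ = 1 - ∫ x, r x ∂μ := by
      rw [integral_congr_ae (Eventually.of_forall ipr),
        integral_sub (integrable_const 1) Ir, integral_const]
      simp
    linarith
  have hqμ : 0 < ∫ x, q x ∂μ := by
    refine pos_int Iq (fun x => le_max_right _ _) measurableSet_Iio
      (ha _ (Iio_mem_nhds (by linarith : a < (a + (b-1))/2)))
      (show (0:ℝ) < (b-a-1)/2 by linarith) ?_
    intro x hx
    have : (b-a-1)/2 ≤ b - x - 1 := by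
      have := hx.out
      linarith [hx.out]
    exact le_trans this (le_max_left _ _)
  have hfinal : ∫ x, x ∂μ = b - ∫ x, p x ∂μ - ∫ x, q x ∂μ := by
    have I1 : Integrable (fun x => b - p x) μ := (integrable_const b).sub Ip
    rw [integral_congr_ae (Eventually.of_forall ipq),
      integral_sub I1 Iq,
      integral_sub (integrable_const b) Ip, integral_const]
    simp
  linarith

lemma var_lower (μ : Measure ℝ) [IsProbabilityMeasure μ] (hle : μ ≤ volume) {a b m : ℝ}
    (hμab : ∀ᵐ x ∂μ, x ∈ Set.Icc a b) (hm : m + 1/2 < b)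
    (hb : ∀ U ∈ nhds b, μ U ≠ 0) : 1/12 < ∫ x, (x - m)^2 ∂μ := by
  set P : ℝ → ℝ := fun x => max (1/4 - (x - m)^2) 0 with hP_def
  set Q : ℝ → ℝ := fun x => max ((x - m)^2 - 1/4) 0 with hQ_def
  have hP : Continuous P :=
    (continuous_const.sub ((continuous_id.sub continuous_const).pow 2)).max continuous_const
  have hQ : Continuous Q :=
    (((continuous_id.sub continuous_const).pow 2).sub continuous_const).max continuous_const
  have IP : Integrable P μ := cont_int hμab hP
  have IQ : Integrable Q μ := cont_int hμab hQ
  have idf : ∀ x : ℝ, (x - m)^2 = 1/4 - P x + Q x := by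
    intro x
    rcases le_total ((x - m)^2) (1/4) with h | h
    · rw [hP_def, hQ_def]; simp only
      rw [max_eq_left (by linarith), max_eq_right (by linarith)]; ring
    · rw [hP_def, hQ_def]; simp only
      rw [max_eq_right (by linarith), max_eq_left (by linarith)]; ring
  have hind : ∀ x : ℝ, P x = (Icc (m - 1/2) (m + 1/2)).indicator P x := by
    intro x
    by_cases h : x ∈ Icc (m - 1/2) (m + 1/2)
    · rw [indicator_of_mem h]
    · rw [indicator_of_notMem h]
      rw [mem_Icc, not_and_or, not_le, not_le] at h
      have h2 : 1/4 < (x - m)^2 := by rcases h with h | h <;> nlinarith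
      exact max_eq_right (by linarith)
  have hvol : ∫ x in Icc (m - 1/2) (m + 1/2), P x = 1/6 := by
    rw [setIntegral_congr_fun measurableSet_Icc
      (g := fun x => 1/4 - (x - m)^2)
      (fun x hx => max_eq_left (by nlinarith [hx.1, hx.2]))]
    rw [integral_Icc_eq_integral_Ioc, ← intervalIntegral.integral_of_le (by linarith)]
    have hsq : ∫ x in (m - 1/2)..(m + 1/2), (x - m)^2 = 1/12 := by
      rw [intervalIntegral.integral_comp_sub_right (fun y => y^2) m]
      rw [integral_pow]
      norm_num
    have hII : IntervalIntegrable (fun x : ℝ => (x - m)^2) volume (m - 1/2) (m + 1/2) :=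
      (by fun_prop : Continuous fun x : ℝ => (x - m)^2).intervalIntegrable _ _
    rw [intervalIntegral.integral_sub intervalIntegrable_const hII, hsq]
    simp
    ring
  have hPμ : ∫ x, P x ∂μ ≤ 1/6 := by
    rw [← hvol]
    exact upper_int hle measurableSet_Icc (Eventually.of_forall hind)
      (fun x => le_max_right _ _) (hP.integrableOn_Icc)
  have hQμ : 0 < ∫ x, Q x ∂μ := by
    set c : ℝ := (m + 1/2 + b)/2 with hc_def
    have hc1 : m + 1/2 < c := by rw [hc_def]; linarith
    have hc2 : c < b := by rw [hc_def]; linarith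
    refine pos_int IQ (fun x => le_max_right _ _) measurableSet_Ioi
      (hb _ (Ioi_mem_nhds hc2)) (show (0:ℝ) < (c - m)^2 - 1/4 by nlinarith) ?_
    intro x hx
    have hx' : c < x := hx.out
    have : (c - m)^2 ≤ (x - m)^2 := by nlinarith
    exact le_trans (by linarith) (le_max_left _ _)
  have hfinal : ∫ x, (x - m)^2 ∂μ = 1/4 - ∫ x, P x ∂μ + ∫ x, Q x ∂μ := by
    have I1 : Integrable (fun x => 1/4 - P x) μ := (integrable_const (1/4)).sub IP
    rw [integral_congr_ae (Eventually.of_forall idf), integral_add I1 IQ,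
      integral_sub (integrable_const (1/4)) IP, integral_const]
    simp
  linarith

/-- With `μ₁ = ∫ x dμ(x)` and `μ₂ = ∫ x² dμ(x)`, one has
`a + 1/2 < μ₁ < b - 1/2` and `μ₂ - μ₁² > 1/12`. -/
theorem moment_bounds (μ : Measure ℝ) (a b : ℝ) [IsProbabilityMeasure μ]
    (hle : μ ≤ volume) (hsupp : msupport μ ⊆ Set.Icc a b)
    (ha : a ∈ msupport μ) (hb : b ∈ msupport μ) (hab : 1 < b - a) :
    a + 1 / 2 < ∫ x, x ∂μ ∧ (∫ x, x ∂μ) < b - 1 / 2 ∧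
      1 / 12 < (∫ x, x ^ 2 ∂μ) - (∫ x, x ∂μ) ^ 2 := by
  have h0 : μ ((Set.Icc a b)ᶜ) = 0 := by
    refine measure_null_of_locally_null _ fun x hx => ?_
    have hx' : x ∉ msupport μ := fun h => hx (hsupp h)
    simp only [msupport, mem_setOf_eq, not_forall] at hx'
    obtain ⟨U, hU, hU0⟩ := hx'
    exact ⟨U, nhdsWithin_le_nhds hU, by simpa using hU0⟩
  have hμab : ∀ᵐ x ∂μ, x ∈ Set.Icc a b := by
    rw [ae_iff]
    simpa [compl_def] using h0
  have ha' : ∀ U ∈ nhds a, μ U ≠ 0 := ha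
  have hb' : ∀ U ∈ nhds b, μ U ≠ 0 := hb
  have h1 : a + 1/2 < ∫ x, x ∂μ := mean_lower μ hle hμab hab hb'
  have h2 : (∫ x, x ∂μ) < b - 1/2 := mean_upper μ hle hμab hab ha'
  set m : ℝ := ∫ x, x ∂μ with hm_def
  have hv : 1/12 < ∫ x, (x - m)^2 ∂μ :=
    var_lower μ hle hμab (by linarith) hb'
  have I1 : Integrable (fun x => x) μ := cont_int hμab continuous_id
  have I2 : Integrable (fun x : ℝ => x^2) μ := cont_int hμab (by fun_prop)
  have hvar : ∫ x, (x - m)^2 ∂μ = (∫ x, x^2 ∂μ) - m^2 := by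
    have e1 : ∫ x, (x - m)^2 ∂μ = ∫ x, (x^2 - 2*m*x + m^2) ∂μ :=
      integral_congr_ae (Eventually.of_forall fun x => by ring)
    have I3 : Integrable (fun x => x^2 - 2*m*x) μ := I2.sub (I1.const_mul (2*m))
    rw [e1, integral_add I3 (integrable_const _),
      integral_sub I2 (I1.const_mul (2*m)), integral_const_mul, integral_const]
    simp only [measure_univ, ENNReal.toReal_one, one_smul, smul_eq_mul, probReal_univ]
    rw [← hm_def]
    ring
  refine ⟨by exact_mod_cast h1, by exact_mod_cast h2, ?_⟩
  rw [← hm_def] at *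
  have := hvar ▸ hv
  linarith
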